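/- Let n ≥ 1, and let C₁, L, d > 0. There exists a natural number K = K(n, C₁, L, d) such that the following holds: for every ε ∈ (0, 1) and every nonnegative function f : B_1 → ℝ on the unit ball B_1 ⊂ ℝⁿ that is Lipschitz continuous with Lipschitz constant at most L/ε and satisfies ∫_{B_1} f(y) dy ≤ C₁ εⁿ, the set {y ∈ B_1 : f(y) > d} can be covered by at most K balls of radius ε. -/

import Mathlib

open MeasureTheory Filter

/-- The Laplacian of a scalar function on `ℝⁿ`, as the sum of second partial
derivatives in the coordinate directions. -/
noncomputable def lapComp {n : ℕ} (f : EuclideanSpace ℝ (Fin n) → ℝ)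
    (x : EuclideanSpace ℝ (Fin n)) : ℝ :=
  ∑ j : Fin n,
    iteratedFDeriv ℝ 2 f x ![EuclideanSpace.single j 1, EuclideanSpace.single j 1]

/-- `|∇u|² = Σ_{k,j} (∂u_k/∂x_j)²` for a map `u : ℝⁿ → ℝ^m`. -/
noncomputable def gradSq {n m : ℕ}
    (u : EuclideanSpace ℝ (Fin n) → EuclideanSpace ℝ (Fin m))
    (x : EuclideanSpace ℝ (Fin n)) : ℝ :=
  ∑ k : Fin m, ∑ j : Fin n, (fderiv ℝ u x (EuclideanSpace.single j 1) k) ^ 2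

/-- `u` is a `C²` solution of the system `Δu = ∇W(u)` on `ℝⁿ`,
i.e. `Δu_k = ∂W/∂u_k (u)` for each `k`. -/
def IsSolution {n m : ℕ} (W : EuclideanSpace ℝ (Fin m) → ℝ)
    (u : EuclideanSpace ℝ (Fin n) → EuclideanSpace ℝ (Fin m)) : Prop :=
  ContDiff ℝ 2 u ∧
    ∀ (x : EuclideanSpace ℝ (Fin n)) (k : Fin m),
      lapComp (fun y => u y k) x = fderiv ℝ W (u x) (EuclideanSpace.single k 1)

/-- `u` is a globally minimizing solution of `Δu = ∇W(u)` on `ℝⁿ`: it is a `C²`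
solution and for every bounded open set `Ω` and every `C¹` map `v` agreeing with
`u` outside `Ω`, the energy of `u` on `Ω` does not exceed that of `v`. -/
def IsGlobalMinimizer {n m : ℕ} (W : EuclideanSpace ℝ (Fin m) → ℝ)
    (u : EuclideanSpace ℝ (Fin n) → EuclideanSpace ℝ (Fin m)) : Prop :=
  IsSolution W u ∧
    ∀ Ω : Set (EuclideanSpace ℝ (Fin n)), IsOpen Ω → Bornology.IsBounded Ω →
      ∀ v : EuclideanSpace ℝ (Fin n) → EuclideanSpace ℝ (Fin m),
        ContDiff ℝ 1 v → (∀ x, x ∉ Ω → v x = u x) →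
        (∫ x in Ω, ((1 : ℝ) / 2 * gradSq u x + W (u x))) ≤
          ∫ x in Ω, ((1 : ℝ) / 2 * gradSq v x + W (v x))

/-- Bethuel-type covering lemma: the superlevel set `{f > d}` of a nonnegative
function on the unit ball with Lipschitz constant `L/ε` and integral at most
`C₁ εⁿ` is covered by a bounded number `K` of balls of radius `ε`. -/
theorem covering_of_superlevel_set (n : ℕ) (hn : 1 ≤ n) (C₁ L d : ℝ)
    (hC₁ : 0 < C₁) (hL : 0 < L) (hd : 0 < d) :
    ∃ K : ℕ, ∀ ε : ℝ, ε ∈ Set.Ioo (0 : ℝ) 1 →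
      ∀ f : EuclideanSpace ℝ (Fin n) → ℝ,
        (∀ y ∈ Metric.ball (0 : EuclideanSpace ℝ (Fin n)) 1, 0 ≤ f y) →
        LipschitzOnWith (Real.toNNReal (L / ε)) f
          (Metric.ball (0 : EuclideanSpace ℝ (Fin n)) 1) →
        (∫ y in Metric.ball (0 : EuclideanSpace ℝ (Fin n)) 1, f y) ≤ C₁ * ε ^ n →
        ∃ c : Fin K → EuclideanSpace ℝ (Fin n),
          {y ∈ Metric.ball (0 : EuclideanSpace ℝ (Fin n)) 1 | d < f y} ⊆
            ⋃ i, Metric.ball (c i) ε := by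
  classical
  haveI : Nonempty (Fin n) := Fin.pos_iff_nonempty.mp hn
  set ρ : ℝ := min (1/2) (d/(2*L)) with hρ
  have hρ0 : 0 < ρ := lt_min (by norm_num) (by positivity)
  have hρhalf : ρ ≤ 1/2 := min_le_left _ _
  set ω : ℝ := (volume (Metric.ball (0:(EuclideanSpace ℝ (Fin n))) 1)).toReal with hω
  have hωlt : volume (Metric.ball (0:(EuclideanSpace ℝ (Fin n))) 1) < ⊤ := measure_ball_lt_top
  have hω0 : 0 < ω := ENNReal.toReal_pos (Metric.measure_ball_pos volume 0 one_pos).ne' hωlt.ne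
  set c₀ : ℝ := (d/2) * (ρ/2)^n * ω with hc₀
  have hc₀0 : 0 < c₀ := by positivity
  refine ⟨⌈C₁ / c₀⌉₊, ?_⟩
  intro ε hε f hf0 hlip hint
  obtain ⟨hε0, hε1⟩ := hε
  set K := ⌈C₁ / c₀⌉₊ with hK
  set B := Metric.ball (0:(EuclideanSpace ℝ (Fin n))) 1 with hB
  set S := {y ∈ B | d < f y} with hS
  have hSB : S ⊆ B := fun y hy => hy.1
  set r : ℝ := ρ * ε with hr
  have hr0 : 0 < r := by positivity
  have hrε : r ≤ ε/2 := by
    rw [hr]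
    calc ρ * ε ≤ (1/2) * ε := by
          exact mul_le_mul_of_nonneg_right hρhalf hε0.le
      _ = ε/2 := by ring
  have hr1 : r ≤ 1 := hrε.trans (by linarith)
  have hLε : 0 < L / ε := by positivity
  have hcoe : ((Real.toNNReal (L / ε)) : ℝ) = L / ε := Real.coe_toNNReal _ hLε.le
  -- shifted centers
  set z : (EuclideanSpace ℝ (Fin n)) → (EuclideanSpace ℝ (Fin n)) := fun x => (1 - r/2) • x with hz
  have h1r : 0 ≤ 1 - r/2 := by linarith
  -- small ball inclusion
  have hz_sub : ∀ x ∈ B, Metric.ball (z x) (r/2) ⊆ Metric.ball x r ∩ B := by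
    intro x hx y hy
    have hx1 : ‖x‖ < 1 := mem_ball_zero_iff.mp hx
    have hx0 : 0 ≤ ‖x‖ := norm_nonneg x
    have hyz : ‖y - z x‖ < r/2 := by
      simpa [dist_eq_norm] using Metric.mem_ball.mp hy
    have hzx : ‖z x - x‖ = (r/2) * ‖x‖ := by
      have : z x - x = (-(r/2)) • x := by
        show (1 - r/2) • x - x = _
        module
      rw [this, norm_smul]
      simp [abs_of_nonneg hr0.le]
    have hzn : ‖z x‖ = (1 - r/2) * ‖x‖ := by
      rw [hz]; simp only [norm_smul]
      rw [Real.norm_of_nonneg h1r]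
    constructor
    · rw [Metric.mem_ball, dist_eq_norm]
      calc ‖y - x‖ ≤ ‖y - z x‖ + ‖z x - x‖ := norm_sub_le_norm_sub_add_norm_sub _ _ _
        _ < r/2 + (r/2) * ‖x‖ := by rw [hzx]; exact add_lt_add_of_lt_of_le hyz le_rfl
        _ ≤ r/2 + (r/2) * 1 := by
            have := mul_le_mul_of_nonneg_left hx1.le (by linarith : (0:ℝ) ≤ r/2)
            linarith
        _ = r := by ring
    · rw [hB, mem_ball_zero_iff]
      calc ‖y‖ ≤ ‖y - z x‖ + ‖z x‖ := by
            have h := norm_add_le (y - z x) (z x)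
            simpa using h
        _ < r/2 + (1 - r/2) * ‖x‖ := by rw [hzn]; exact add_lt_add_of_lt_of_le hyz le_rfl
        _ ≤ r/2 + (1 - r/2) * 1 := by
            have := mul_le_mul_of_nonneg_left hx1.le h1r
            linarith
        _ = 1 := by ring
  -- f is at least d/2 on the small balls
  have hfd2 : ∀ x ∈ S, ∀ y ∈ Metric.ball (z x) (r/2), d/2 ≤ f y := by
    intro x hx y hy
    obtain ⟨hyx, hyB⟩ := hz_sub x hx.1 hy
    have hdist : dist y x < r := Metric.mem_ball.mp hyx
    have hl : dist (f y) (f x) ≤ (L/ε) * dist y x := by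
      have := hlip.dist_le_mul y hyB x hx.1
      rwa [hcoe] at this
    have habs : f x - f y ≤ (L/ε) * dist y x := by
      have : f x - f y ≤ |f y - f x| := by
        rw [abs_sub_comm]; exact le_abs_self _
      calc f x - f y ≤ |f y - f x| := this
        _ = dist (f y) (f x) := (Real.dist_eq _ _).symm
        _ ≤ (L/ε) * dist y x := hl
    have hLr : (L/ε) * dist y x ≤ d/2 := by
      have h1 : (L/ε) * dist y x ≤ (L/ε) * r :=
        mul_le_mul_of_nonneg_left hdist.le hLε.le
      have h2 : (L/ε) * r = L * ρ := by
        field_simp [hr]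
        ring
      have h3 : L * ρ ≤ L * (d/(2*L)) :=
        mul_le_mul_of_nonneg_left (min_le_right _ _) hL.le
      have h4 : L * (d/(2*L)) = d/2 := by field_simp
      linarith
    have := hx.2
    linarith
  -- integrability of f on B
  have hfB_bdd : ∀ y ∈ B, ‖f y‖ ≤ f 0 + L/ε := by
    intro y hy
    have h0B : (0:(EuclideanSpace ℝ (Fin n))) ∈ B := by simp [hB]
    have hl : dist (f y) (f 0) ≤ (L/ε) * dist y 0 := by
      have := hlip.dist_le_mul y hy 0 h0B
      rwa [hcoe] at this
    have hd1 : dist y 0 ≤ 1 := by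
      have := Metric.mem_ball.mp hy
      linarith
    have : f y - f 0 ≤ L/ε := by
      calc f y - f 0 ≤ |f y - f 0| := le_abs_self _
        _ = dist (f y) (f 0) := (Real.dist_eq _ _).symm
        _ ≤ (L/ε) * dist y 0 := hl
        _ ≤ (L/ε) * 1 := mul_le_mul_of_nonneg_left hd1 hLε.le
        _ = L/ε := mul_one _
    rw [Real.norm_eq_abs, abs_of_nonneg (hf0 y hy)]
    linarith
  have hInt : IntegrableOn f B volume := by
    refine ⟨(hlip.continuousOn.aestronglyMeasurable Metric.isOpen_ball.measurableSet), ?_⟩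
    refine HasFiniteIntegral.restrict_of_bounded (C := f 0 + L/ε) measure_ball_lt_top ?_
    exact (ae_restrict_iff' Metric.isOpen_ball.measurableSet).mpr (ae_of_all _ hfB_bdd)
  have hf0ae : 0 ≤ᵐ[volume.restrict B] f :=
    (ae_restrict_iff' Metric.isOpen_ball.measurableSet).mpr (ae_of_all _ hf0)
  -- volume of the small balls
  have hvol : ∀ x : (EuclideanSpace ℝ (Fin n)), (volume (Metric.ball (z x) (r/2))).toReal = (r/2)^n * ω := by
    intro x
    rw [Measure.addHaar_ball volume (z x) (by linarith : (0:ℝ) ≤ r/2)]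
    rw [ENNReal.toReal_mul, ENNReal.toReal_ofReal (by positivity)]
    congr 2
    exact finrank_euclideanSpace_fin
  -- every ε-separated finite subset of S has cardinality at most K
  have hcard : ∀ T' : Finset (EuclideanSpace ℝ (Fin n)), ↑T' ⊆ S →
      (↑T' : Set (EuclideanSpace ℝ (Fin n))).Pairwise (fun a b => ε ≤ dist a b) → T'.card ≤ K := by
    intro T' hT'S hsep
    have hmeas : ∀ x ∈ T', MeasurableSet (Metric.ball (z x) (r/2)) :=
      fun x _ => Metric.isOpen_ball.measurableSet
    have hdisj : Set.Pairwise (↑T' : Set (EuclideanSpace ℝ (Fin n)))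
        (Function.onFun Disjoint fun x => Metric.ball (z x) (r/2)) := by
      intro a ha b hb hab
      have hdab : ε ≤ dist a b := hsep ha hb hab
      have hzd : dist (z a) (z b) = (1 - r/2) * dist a b := by
        rw [hz]; simp only [dist_smul₀, Real.norm_of_nonneg h1r]
      apply Metric.ball_disjoint_ball
      rw [hzd]
      have h34 : (3/4 : ℝ) ≤ 1 - r/2 := by
        have : r ≤ 1/2 := hrε.trans (by linarith)
        linarith
      calc r/2 + r/2 = r := by ring
        _ ≤ ε/2 := hrε
        _ ≤ (3/4) * ε := by linarith
        _ ≤ (1 - r/2) * ε := mul_le_mul_of_nonneg_right h34 hε0.le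
        _ ≤ (1 - r/2) * dist a b := mul_le_mul_of_nonneg_left hdab (by linarith)
    have hsub : ∀ x ∈ T', Metric.ball (z x) (r/2) ⊆ B := by
      intro x hx
      exact (hz_sub x (hT'S hx).1).trans Set.inter_subset_right
    have hIntEach : ∀ x ∈ T', IntegrableOn f (Metric.ball (z x) (r/2)) volume :=
      fun x hx => hInt.mono_set (hsub x hx)
    have h1 : ∑ x ∈ T', ((d/2) * (r/2)^n * ω) ≤
        ∑ x ∈ T', ∫ y in Metric.ball (z x) (r/2), f y := by
      refine Finset.sum_le_sum ?_
      intro x hx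
      have hconst : ∫ _ in Metric.ball (z x) (r/2), (d/2 : ℝ) =
          (volume (Metric.ball (z x) (r/2))).toReal * (d/2) := by
        rw [setIntegral_const]; simp [smul_eq_mul, Measure.real]
      have hmono : ∫ _ in Metric.ball (z x) (r/2), (d/2 : ℝ) ≤
          ∫ y in Metric.ball (z x) (r/2), f y := by
        refine setIntegral_mono_on ?_ (hIntEach x hx) Metric.isOpen_ball.measurableSet ?_
        · exact integrableOn_const measure_ball_lt_top.ne
        · exact fun y hy => hfd2 x (hT'S hx) y hy
      calc (d/2) * (r/2)^n * ω
          = (volume (Metric.ball (z x) (r/2))).toReal * (d/2) := by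
            rw [hvol x]; ring
        _ = ∫ _ in Metric.ball (z x) (r/2), (d/2 : ℝ) := hconst.symm
        _ ≤ ∫ y in Metric.ball (z x) (r/2), f y := hmono
    have h2 : ∑ x ∈ T', ∫ y in Metric.ball (z x) (r/2), f y =
        ∫ y in ⋃ x ∈ T', Metric.ball (z x) (r/2), f y :=
      (integral_biUnion_finset T' hmeas hdisj hIntEach).symm
    have h3 : ∫ y in ⋃ x ∈ T', Metric.ball (z x) (r/2), f y ≤ ∫ y in B, f y := by
      refine setIntegral_mono_set hInt hf0ae ?_
      refine HasSubset.Subset.eventuallyLE ?_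
      exact Set.iUnion₂_subset hsub
    have hsum : (T'.card : ℝ) * ((d/2) * (r/2)^n * ω) ≤ C₁ * ε ^ n := by
      have := le_trans h1 (le_of_eq h2)
      have := le_trans this h3
      have := le_trans this hint
      rwa [Finset.sum_const, nsmul_eq_mul] at this
    have hrpow : (r/2)^n = (ρ/2)^n * ε^n := by
      rw [hr]
      rw [show ρ * ε / 2 = (ρ/2) * ε by ring, mul_pow]
    have hεn : (0:ℝ) < ε ^ n := by positivity
    have hfinal : (T'.card : ℝ) * c₀ ≤ C₁ := by
      have h5 : (T'.card : ℝ) * c₀ * ε^n ≤ C₁ * ε^n := by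
        calc (T'.card : ℝ) * c₀ * ε^n
            = (T'.card : ℝ) * ((d/2) * (r/2)^n * ω) := by
              rw [hc₀, hrpow]; ring
          _ ≤ C₁ * ε ^ n := hsum
      exact le_of_mul_le_mul_right h5 hεn
    have : (T'.card : ℝ) ≤ C₁ / c₀ := by
      rw [le_div_iff₀ hc₀0]; exact hfinal
    have : (T'.card : ℝ) ≤ (K : ℝ) := this.trans (Nat.le_ceil _)
    exact_mod_cast this
  -- Zorn: maximal ε-separated subset of S
  obtain ⟨T, hT⟩ := zorn_subset
      {T : Set (EuclideanSpace ℝ (Fin n)) | T ⊆ S ∧ T.Pairwise (fun a b => ε ≤ dist a b)} (by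
    intro c hc hchain
    refine ⟨⋃₀ c, ⟨?_, ?_⟩, fun s hs => Set.subset_sUnion_of_mem hs⟩
    · exact Set.sUnion_subset fun t ht => (hc ht).1
    · intro a ha b hb hab
      obtain ⟨t₁, ht₁, hat⟩ := ha
      obtain ⟨t₂, ht₂, hbt⟩ := hb
      rcases hchain.total ht₁ ht₂ with h | h
      · exact (hc ht₂).2 (h hat) hbt hab
      · exact (hc ht₁).2 hat (h hbt) hab)
  obtain ⟨⟨hTS, hTsep⟩, hTmax⟩ := hT
  -- S is covered by balls of radius ε around T
  have hcover : S ⊆ ⋃ x ∈ T, Metric.ball x ε := by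
    intro y hy
    by_contra hyn
    simp only [Set.mem_iUnion, Metric.mem_ball, not_exists] at hyn
    have hyT : y ∉ T := by
      intro hyT
      exact absurd hε0 (by simpa using hyn y hyT)
    have hins : insert y T ∈ {T : Set (EuclideanSpace ℝ (Fin n)) | T ⊆ S ∧ T.Pairwise (fun a b => ε ≤ dist a b)} := by
      constructor
      · exact Set.insert_subset hy hTS
      · haveI : Std.Symm (fun a b : EuclideanSpace ℝ (Fin n) => ε ≤ dist a b) := ⟨fun a b h => by rwa [dist_comm]⟩
        rw [Set.pairwise_insert_of_symm]
        refine ⟨hTsep, fun b hb hne => ?_⟩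
        have := hyn b hb
        rw [dist_comm]
        exact not_lt.mp (fun h => this (by rwa [dist_comm] at h))
    have := hTmax hins (Set.subset_insert y T)
    exact hyT (this (Set.mem_insert y T))
  -- T is finite of cardinality at most K
  have hTfin : T.Finite := by
    by_contra hinf
    obtain ⟨T', hT'sub, hT'card⟩ := Set.Infinite.exists_subset_card_eq hinf (K+1)
    have := hcard T' (hT'sub.trans hTS) (hTsep.mono hT'sub)
    omega
  set F : Finset (EuclideanSpace ℝ (Fin n)) := hTfin.toFinset with hF
  have hFcard : F.card ≤ K := by
    apply hcard
    · rw [hF]; rw [Set.Finite.coe_toFinset]; exact hTS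
    · rw [hF]; rw [Set.Finite.coe_toFinset]; exact hTsep
  -- build the covering function
  set l : List (EuclideanSpace ℝ (Fin n)) := F.toList with hl
  refine ⟨fun i => l.getD i 0, ?_⟩
  intro y hy
  obtain ⟨x, hxT, hyx⟩ := Set.mem_iUnion₂.mp (hcover hy)
  have hxl : x ∈ l := by
    rw [hl, Finset.mem_toList, hF, Set.Finite.mem_toFinset]
    exact hxT
  obtain ⟨j, hj, hjx⟩ := List.mem_iff_getElem.mp hxl
  have hjK : j < K := by
    have : l.length = F.card := Finset.length_toList F
    omega
  refine Set.mem_iUnion.mpr ⟨⟨j, hjK⟩, ?_⟩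
  show y ∈ Metric.ball (l.getD j 0) ε
  rw [List.getD_eq_getElem l 0 hj, hjx]
  exact hyx
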